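/- Let S be a countable commutative semigroup with dS piecewise syndetic in S for all d ∈ ℕ, and let M ⊆ S be piecewise syndetic. Then M^{l+1} ∩ AP^{l+1} is piecewise syndetic in the semigroup AP^{l+1} = {(a, a+b, ..., a+lb) : a,b ∈ S}. -/

import Mathlib

/-- `Thick B`: every finite set has a translate contained in `B`. -/
def Thick {S : Type*} [AddCommSemigroup S] (B : Set S) : Prop :=
  ∀ F : Finset S, ∃ x : S, ∀ f ∈ F, f + x ∈ B

/-- `PiecewiseSyndetic A`: some finite union of translates `-t+A` is thick. -/
def PiecewiseSyndetic {S : Type*} [AddCommSemigroup S] (A : Set S) : Prop :=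
  ∃ F : Finset S, Thick {s : S | ∃ t ∈ F, t + s ∈ A}

/-- `itAdd n t` is the `(n+1)`-fold sum `t + t + ⋯ + t`. -/
def itAdd {S : Type*} [AddCommSemigroup S] : ℕ → S → S
  | 0, t => t
  | n + 1, t => itAdd n t + t

/-- The subsemigroup `AP^{l+1} = {(a, a+b, …, a+lb) : a, b ∈ S}` of `S^{l+1}`. -/
def APsub (S : Type*) [AddCommSemigroup S] (l : ℕ) :
    AddSubsemigroup (Fin (l + 1) → S) where
  carrier := {f | ∃ a b : S, f 0 = a ∧ ∀ i : Fin l, f i.succ = f i.castSucc + b}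
  add_mem' := by
    rintro f g ⟨a, b, hf0, hf⟩ ⟨a', b', hg0, hg⟩
    refine ⟨a + a', b + b', by simp [hf0, hg0], fun i => ?_⟩
    simp only [Pi.add_apply, hf i, hg i]
    exact add_add_add_comm _ _ _ _

set_option linter.unusedSectionVars false

namespace StmtAux

open Filter Set

attribute [local instance] Ultrafilter.add Ultrafilter.addSemigroup

section UF

variable {G : Type*} [AddSemigroup G]

theorem mem_uadd {A : Set G} {U V : Ultrafilter G} :
    A ∈ U + V ↔ {m : G | {m' : G | m + m' ∈ A} ∈ V} ∈ U := by
  have h := Ultrafilter.eventually_add U V (· ∈ A)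
  simp only [Filter.eventually_iff, Ultrafilter.mem_coe] at h
  simpa using h

theorem map_uadd {G' : Type*} [AddSemigroup G'] (f : G → G')
    (hf : ∀ x y : G, f (x + y) = f x + f y) (U V : Ultrafilter G) :
    Ultrafilter.map f (U + V) = Ultrafilter.map f U + Ultrafilter.map f V := by
  apply Ultrafilter.coe_injective
  apply Filter.ext
  intro A
  show A ∈ Ultrafilter.map f (U + V) ↔ A ∈ Ultrafilter.map f U + Ultrafilter.map f V
  rw [Ultrafilter.mem_map, mem_uadd, mem_uadd]
  rw [Ultrafilter.mem_map]
  have hset : f ⁻¹' {m : G' | {m' : G' | m + m' ∈ A} ∈ Ultrafilter.map f V}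
      = {m : G | {m' : G | m + m' ∈ f ⁻¹' A} ∈ V} := by
    ext x
    simp only [mem_preimage, mem_setOf_eq, Ultrafilter.mem_map]
    have h2 : f ⁻¹' {m' : G' | f x + m' ∈ A} = {m' : G | f (x + m') ∈ A} := by
      ext y; simp [hf]
    rw [h2]
  rw [hset]

theorem continuous_umap {α β : Type*} (f : α → β) :
    Continuous (Ultrafilter.map f) := by
  refine ultrafilterBasis_is_basis.continuous_iff.2 <| Set.forall_mem_range.mpr fun s => ?_
  have : Ultrafilter.map f ⁻¹' {u : Ultrafilter β | s ∈ u} = {q : Ultrafilter α | f ⁻¹' s ∈ q} := by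
    ext q; simp [Ultrafilter.mem_map]
  rw [this]
  exact ultrafilter_isOpen_basic (f ⁻¹' s)

end UF

section CRS

variable {C : Type*} [AddSemigroup C] [TopologicalSpace C] [CompactSpace C] [T2Space C]

/-- `L` is a left ideal relative to the subsemigroup `V`. -/
def IsLI (V L : Set C) : Prop :=
  L.Nonempty ∧ L ⊆ V ∧ ∀ ⦃v⦄, v ∈ V → ∀ ⦃x⦄, x ∈ L → v + x ∈ L

/-- `L` is a minimal closed left ideal relative to `V`. -/
def MinLI (V L : Set C) : Prop :=
  IsLI V L ∧ IsClosed L ∧ ∀ L', IsLI V L' → IsClosed L' → L' ⊆ L → L' = L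

theorem exists_minLI {V J : Set C} (hJ : IsLI V J) (hJc : IsClosed J) :
    ∃ L, L ⊆ J ∧ MinLI V L := by
  set 𝒮 : Set (Set C) := {L | L ⊆ J ∧ IsLI V L ∧ IsClosed L} with h𝒮
  have hchaincond : ∀ c ⊆ 𝒮, IsChain (· ⊆ ·) c → c.Nonempty →
      ∃ lb ∈ 𝒮, ∀ s ∈ c, lb ⊆ s := by
    intro c hc hchain hcne
    haveI : Nonempty c := hcne.to_subtype
    have hnon : (⋂₀ c).Nonempty := by
      apply IsCompact.nonempty_sInter_of_directed_nonempty_isCompact_isClosed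
      · haveI : IsRefl (Set C) (flip fun x1 x2 : Set C => x1 ⊆ x2) := ⟨fun a => Subset.rfl⟩
        exact (hchain.symm).directedOn
      · exact fun U hU => (hc hU).2.1.1
      · exact fun U hU => (hc hU).2.2.isCompact
      · exact fun U hU => (hc hU).2.2
    obtain ⟨U₀, hU₀⟩ := hcne
    refine ⟨⋂₀ c, ⟨(sInter_subset_of_mem hU₀).trans (hc hU₀).1,
        ⟨hnon, (sInter_subset_of_mem hU₀).trans (hc hU₀).2.1.2.1, ?_⟩,
        isClosed_sInter fun U hU => (hc hU).2.2⟩, fun s hs => sInter_subset_of_mem hs⟩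
    intro v hv x hx
    exact mem_sInter.mpr fun U hU => (hc hU).2.1.2.2 hv (mem_sInter.mp hx U hU)
  obtain ⟨m, hmJ, hmin⟩ := zorn_superset_nonempty 𝒮 hchaincond J ⟨Subset.rfl, hJ, hJc⟩
  refine ⟨m, hmJ, hmin.prop.2.1, hmin.prop.2.2, fun L' h1 h2 h3 => ?_⟩
  have hL'𝒮 : L' ∈ 𝒮 := ⟨h3.trans hmJ, h1, h2⟩
  exact subset_antisymm h3 (hmin.2 hL'𝒮 h3)

theorem minLI_le (hcont : ∀ r : C, Continuous (· + r)) {V L J : Set C}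
    (hVc : IsClosed V) (hVs : ∀ x ∈ V, ∀ y ∈ V, x + y ∈ V)
    (hL : MinLI V L) (hJ : IsLI V J) (hJL : J ⊆ L) : L ⊆ J := by
  obtain ⟨q, hq⟩ := hJ.1
  have hqV : q ∈ V := hJ.2.1 hq
  have hKc : IsClosed ((fun v => v + q) '' V) := (hVc.isCompact.image (hcont q)).isClosed
  have hKJ : (fun v => v + q) '' V ⊆ J := by
    rintro _ ⟨v, hv, rfl⟩; exact hJ.2.2 hv hq
  have hKLI : IsLI V ((fun v => v + q) '' V) := by
    refine ⟨⟨q + q, ⟨q, hqV, rfl⟩⟩, ?_, ?_⟩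
    · rintro _ ⟨v, hv, rfl⟩; exact hVs v hv q hqV
    · rintro v hv _ ⟨u, hu, rfl⟩
      exact ⟨v + u, hVs v hv u hu, add_assoc v u q⟩
  have := hL.2.2 _ hKLI hKc (hKJ.trans hJL)
  rw [← this]
  exact hKJ

theorem mem_minLI_of_mem {V LW : Set C} (hcont : ∀ r : C, Continuous (· + r))
    (hVc : IsClosed V) (hVs : ∀ x ∈ V, ∀ y ∈ V, x + y ∈ V)
    (hLW : MinLI univ LW) {p : C} (hpV : p ∈ V) (hpW : p ∈ LW) :
    ∃ LV, MinLI V LV ∧ p ∈ LV := by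
  have hVpLI : IsLI V ((fun v => v + p) '' V) := by
    refine ⟨⟨p + p, ⟨p, hpV, rfl⟩⟩, ?_, ?_⟩
    · rintro _ ⟨v, hv, rfl⟩; exact hVs v hv p hpV
    · rintro v hv _ ⟨u, hu, rfl⟩
      exact ⟨v + u, hVs v hv u hu, add_assoc v u p⟩
  obtain ⟨LV, hLVsub, hLV⟩ := exists_minLI hVpLI ((hVc.isCompact.image (hcont p)).isClosed)
  have hLVadd : ∀ x ∈ LV, ∀ y ∈ LV, x + y ∈ LV := fun x hx y hy =>
    hLV.1.2.2 (hLV.1.2.1 hx) hy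
  obtain ⟨f, hfLV, hff⟩ := exists_idempotent_in_compact_add_subsemigroup hcont LV
    hLV.1.1 hLV.2.1.isCompact hLVadd
  have hfW : f ∈ LW := by
    obtain ⟨v, hv, rfl⟩ := hLVsub hfLV
    exact hLW.1.2.2 (mem_univ v) hpW
  have hYsub : LW ⊆ {x | x ∈ LW ∧ x + f = x} := by
    refine minLI_le hcont isClosed_univ (fun _ _ _ _ => mem_univ _) hLW
      ⟨⟨f, hfW, hff⟩, fun x hx => mem_univ x, ?_⟩ (fun x hx => hx.1)
    rintro v - x ⟨hx, hxf⟩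
    exact ⟨hLW.1.2.2 (mem_univ v) hx, by rw [add_assoc, hxf]⟩
  have hpf : p + f = p := (hYsub hpW).2
  refine ⟨LV, hLV, ?_⟩
  have : p + f ∈ LV := hLV.1.2.2 hpV hfLV
  rwa [hpf] at this

variable {C' : Type*} [AddSemigroup C'] [TopologicalSpace C'] [CompactSpace C'] [T2Space C']

theorem exists_minLI_preimage (hcont' : ∀ r : C', Continuous (· + r))
    {Φ : C → C'} (hΦc : Continuous Φ) (hΦh : ∀ x y, Φ (x + y) = Φ x + Φ y)
    {LV : Set C'} (hLV : MinLI (Set.range Φ) LV) {v : C'} (hv : v ∈ LV) :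
    ∃ q LP, MinLI (univ : Set C) LP ∧ q ∈ LP ∧ Φ q = v := by
  have hrc : IsClosed (Set.range Φ) := (isCompact_range hΦc).isClosed
  have hrs : ∀ x ∈ Set.range Φ, ∀ y ∈ Set.range Φ, x + y ∈ Set.range Φ := by
    rintro _ ⟨a, rfl⟩ _ ⟨b, rfl⟩; exact ⟨a + b, hΦh a b⟩
  obtain ⟨q₀, hq₀⟩ := hLV.1.2.1 hv
  have hJLI : IsLI (univ : Set C) (Φ ⁻¹' LV) := by
    refine ⟨⟨q₀, by simp [mem_preimage, hq₀, hv]⟩, fun x hx => mem_univ x, ?_⟩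
    intro c _ x hx
    show Φ (c + x) ∈ LV
    rw [hΦh]
    exact hLV.1.2.2 ⟨c, rfl⟩ hx
  obtain ⟨LP, hLPJ, hLP⟩ := exists_minLI hJLI (hLV.2.1.preimage hΦc)
  have himg : LV ⊆ Φ '' LP := by
    refine minLI_le hcont' hrc hrs hLV ⟨hLP.1.1.image Φ, ?_, ?_⟩ ?_
    · exact (image_subset_range Φ LP)
    · rintro _ ⟨c, rfl⟩ _ ⟨x, hx, rfl⟩
      exact ⟨c + x, hLP.1.2.2 (mem_univ c) hx, hΦh c x⟩
    · rintro _ ⟨x, hx, rfl⟩; exact hLPJ hx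
  obtain ⟨q, hq, hΦq⟩ := himg hv
  exact ⟨q, LP, hLP, hq, hΦq⟩

theorem minLI_pi {I : Type*} {D : Type*} [AddSemigroup D] [TopologicalSpace D]
    [CompactSpace D] [T2Space D] (hcont : ∀ r : D, Continuous (· + r))
    {L : Set D} (hL : MinLI (univ : Set D) L) :
    MinLI (univ : Set (I → D)) {w : I → D | ∀ i, w i ∈ L} := by
  obtain ⟨x₀, hx₀⟩ := hL.1.1
  have hcl : IsClosed {w : I → D | ∀ i, w i ∈ L} := by
    have : {w : I → D | ∀ i, w i ∈ L} = Set.pi univ (fun _ : I => L) := by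
      ext w; simp [Set.mem_pi]
    rw [this]
    exact isClosed_set_pi fun i _ => hL.2.1
  refine ⟨⟨⟨fun _ => x₀, fun i => hx₀⟩, fun x hx => mem_univ x, ?_⟩, hcl, ?_⟩
  · intro v _ x hx
    exact fun i => hL.1.2.2 (mem_univ (v i)) (hx i)
  · intro J hJ hJc hJsub
    obtain ⟨w, hw⟩ := hJ.1
    have key : ∀ i, Set.range (fun d : D => d + w i) = L := by
      intro i
      have hrcl : IsClosed (Set.range fun d : D => d + w i) := by
        rw [← image_univ]
        exact (isCompact_univ.image (hcont (w i))).isClosed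
      refine hL.2.2 _ ⟨⟨w i + w i, ⟨w i, rfl⟩⟩, fun x _ => mem_univ x, ?_⟩ hrcl ?_
      · rintro c - _ ⟨d, rfl⟩; exact ⟨c + d, add_assoc c d (w i)⟩
      · rintro _ ⟨d, rfl⟩; exact hL.1.2.2 (mem_univ d) (hJsub hw i)
    refine subset_antisymm hJsub ?_
    intro u hu
    have hex : ∀ i, ∃ d : D, d + w i = u i := fun i => by
      have : u i ∈ Set.range (fun d : D => d + w i) := (key i).symm ▸ hu i
      exact this
    choose d hd using hex
    have : d + w = u := funext fun i => hd i
    rw [← this]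
    exact hJ.2.2 (mem_univ d) hw

end CRS

section PS

variable {G : Type*} [AddCommSemigroup G]

theorem ps_of_minLI {L : Set (Ultrafilter G)} (hL : MinLI univ L)
    {q : Ultrafilter G} (hq : q ∈ L) {A : Set G} (hA : A ∈ q) :
    PiecewiseSyndetic A := by
  classical
  have hcont : ∀ r : Ultrafilter G, Continuous (· + r) := Ultrafilter.continuous_add_left
  obtain ⟨g₀⟩ : Nonempty G := Ultrafilter.nonempty_of_mem (univ_mem (f := (q : Filter G))) |>.to_subtype.elim (fun x => ⟨x.1⟩)
  have syn : ∃ F : Finset G, ∀ y : G, ∃ t ∈ F, {z : G | t + y + z ∈ A} ∈ q := by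
    by_contra hns
    push_neg at hns
    set N : G → Set G := fun t => {y | {z | t + y + z ∈ A} ∉ q} with hN
    have hFIP : ∀ Tf : Finset (Set G), (↑Tf : Set (Set G)) ⊆ Set.range N →
        (⋂₀ (↑Tf : Set (Set G))).Nonempty := by
      intro Tf hTf
      set φ : Set G → G := fun s => if h : ∃ t, N t = s then h.choose else g₀ with hφ
      have hφs : ∀ s ∈ Tf, N (φ s) = s := by
        intro s hs
        have hex : ∃ t, N t = s := by
          obtain ⟨t, ht⟩ := hTf hs
          exact ⟨t, ht⟩
        simp only [hφ, dif_pos hex]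
        exact hex.choose_spec
      obtain ⟨y, hy⟩ := hns (Tf.image φ)
      refine ⟨y, ?_⟩
      intro s hs
      rw [← hφs s hs]
      exact hy (φ s) (Finset.mem_image_of_mem φ hs)
    obtain ⟨r, hr⟩ := Ultrafilter.exists_ultrafilter_of_finite_inter_nonempty (Set.range N) hFIP
    · have hrN : ∀ t, N t ∈ r := fun t => hr (mem_range_self t)
      have hrqL : r + q ∈ L := hL.1.2.2 (mem_univ r) hq
      have hsub : L ⊆ Set.range (fun v : Ultrafilter G => v + (r + q)) := by
        refine minLI_le hcont isClosed_univ (fun _ _ _ _ => mem_univ _) hL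
          ⟨⟨_, mem_range_self q⟩, fun x _ => mem_univ x, ?_⟩ ?_
        · rintro v - _ ⟨u, rfl⟩
          exact ⟨v + u, add_assoc v u (r + q)⟩
        · rintro _ ⟨u, rfl⟩
          exact hL.1.2.2 (mem_univ u) hrqL
      obtain ⟨v, hv⟩ := hsub hq
      have hv' : v + (r + q) = q := hv
      have h1 : A ∈ v + (r + q) := by rw [hv']; exact hA
      rw [mem_uadd] at h1
      obtain ⟨a, ha⟩ := Ultrafilter.nonempty_of_mem h1
      have ha' : {m' : G | a + m' ∈ A} ∈ r + q := ha
      rw [mem_uadd] at ha' 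
      have hcap := (r.toFilter.inter_mem ha' (hrN a))
      obtain ⟨y, hy1, hy2⟩ := Ultrafilter.nonempty_of_mem hcap
      apply hy2
      have : {z : G | a + (y + z) ∈ A} = {z : G | a + y + z ∈ A} := by
        ext z; simp [add_assoc]
      rw [← this]
      exact hy1
  obtain ⟨F, hFsyn⟩ := syn
  choose t ht hset using hFsyn
  refine ⟨F, fun Gf => ?_⟩
  have hmem : (⋂ g ∈ Gf, {z : G | t g + g + z ∈ A}) ∈ q := by
    rw [← Ultrafilter.mem_coe]
    exact (Filter.biInter_finset_mem Gf).mpr fun g _ => hset g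
  obtain ⟨x, hx⟩ := Ultrafilter.nonempty_of_mem hmem
  refine ⟨x, fun g hg => ?_⟩
  have hgx : t g + g + x ∈ A := Set.mem_iInter₂.mp hx g hg
  exact ⟨t g, ht g, by rwa [← add_assoc]⟩

theorem exists_minLI_of_ps {M : Set G} (hM : PiecewiseSyndetic M) :
    ∃ (p : Ultrafilter G) (L : Set (Ultrafilter G)),
      MinLI univ L ∧ p ∈ L ∧ M ∈ p := by
  classical
  obtain ⟨F, hF⟩ := hM
  set B := {s : G | ∃ t ∈ F, t + s ∈ M} with hB
  set Cset : Finset G → Set G := fun H => {x | ∀ f ∈ H, f + x ∈ B} with hCset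
  have hFIP : ∀ Tf : Finset (Set G), (↑Tf : Set (Set G)) ⊆ Set.range Cset →
      (⋂₀ (↑Tf : Set (Set G))).Nonempty := by
    intro Tf hTf
    set φ : Set G → Finset G := fun s => if h : ∃ H, Cset H = s then h.choose else ∅ with hφ
    have hφs : ∀ s ∈ Tf, Cset (φ s) = s := by
      intro s hs
      have hex : ∃ H, Cset H = s := by
        obtain ⟨H, hH⟩ := hTf hs
        exact ⟨H, hH⟩
      simp only [hφ, dif_pos hex]
      exact hex.choose_spec
    obtain ⟨x, hx⟩ := hF (Tf.sup φ)
    refine ⟨x, ?_⟩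
    intro s hs
    rw [← hφs s hs]
    intro f hf
    exact hx f (Finset.mem_of_subset (Finset.le_sup hs) hf)
  obtain ⟨u, hu⟩ := Ultrafilter.exists_ultrafilter_of_finite_inter_nonempty (Set.range Cset) hFIP
  · have huC : ∀ H, Cset H ∈ u := fun H => hu (mem_range_self H)
    have hBall : ∀ p : Ultrafilter G, B ∈ p + u := by
      intro p
      rw [mem_uadd]
      have : {m : G | {m' : G | m + m' ∈ B} ∈ u} = univ := by
        refine eq_univ_of_forall fun a => ?_
        refine mem_of_superset (huC {a}) fun x hx => ?_
        exact hx a (Finset.mem_singleton_self a)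
      rw [this]
      exact univ_mem
    have hJ : IsLI (univ : Set (Ultrafilter G)) (Set.range (fun p : Ultrafilter G => p + u)) := by
      refine ⟨⟨u + u, mem_range_self u⟩, fun x _ => mem_univ x, ?_⟩
      rintro v - _ ⟨w, rfl⟩
      exact ⟨v + w, add_assoc v w u⟩
    have hJc : IsClosed (Set.range (fun p : Ultrafilter G => p + u)) := by
      rw [← image_univ]
      exact (isCompact_univ.image (Ultrafilter.continuous_add_left u)).isClosed
    obtain ⟨L, hLJ, hL⟩ := exists_minLI hJ hJc
    obtain ⟨r, hr⟩ := hL.1.1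
    have hBr : B ∈ r := by
      obtain ⟨pr, hpr⟩ := hLJ hr
      rw [← hpr]
      exact hBall pr
    have hBun : B = ⋃ t ∈ (F : Set G), {s : G | t + s ∈ M} := by
      ext s; simp [hB]
    rw [hBun] at hBr
    obtain ⟨tm, htF, htM⟩ := (Ultrafilter.finite_biUnion_mem_iff F.finite_toSet).mp hBr
    refine ⟨pure tm + r, L, hL, hL.1.2.2 (mem_univ _) hr, ?_⟩
    rw [mem_uadd]
    rw [Ultrafilter.mem_pure]
    exact htM

end PS

section HJ

variable {S : Type*} [AddCommSemigroup S]

/-- The `k`-th term of the arithmetic progression starting at `a` with difference `b`. -/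
def nthAP (a b : S) : ℕ → S
  | 0 => a
  | k + 1 => nthAP a b k + b

theorem itAdd_add (y : S) (m n : ℕ) :
    itAdd (m + n + 1) y = itAdd m y + itAdd n y := by
  induction n with
  | zero => rfl
  | succ n ih =>
    show itAdd ((m + n + 1) + 1) y = _
    rw [itAdd, ih, itAdd, add_assoc]

theorem exists_ap_of_ps {A : Set S} (hA : PiecewiseSyndetic A) (l : ℕ) :
    ∃ a b : S, ∀ k, k ≤ l → nthAP a b k ∈ A := by
  classical
  obtain ⟨F, hF⟩ := hA
  obtain ⟨y₀, -⟩ := hF ∅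
  obtain ⟨ι, ιfin, hHJ⟩ :=
    Combinatorics.Line.exists_mono_in_high_dimension (Fin (l + 1)) {t : S // t ∈ F}
  haveI := ιfin
  set wt : (ι → Fin (l + 1)) → ℕ := fun e => ∑ i, ((e i : ℕ) + 1) with hwtdef
  set g : (ι → Fin (l + 1)) → S := fun e => itAdd (wt e - 1) y₀ with hgdef
  obtain ⟨x, hx⟩ := hF (Finset.univ.image g)
  have hsel : ∀ e : ι → Fin (l + 1), ∃ t, t ∈ F ∧ t + (g e + x) ∈ A := by
    intro e
    obtain ⟨t, ht, hta⟩ := hx (g e) (Finset.mem_image_of_mem g (Finset.mem_univ e))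
    exact ⟨t, ht, hta⟩
  choose T hTF hTA using hsel
  obtain ⟨line, c, hline⟩ := hHJ fun e => ⟨T e, hTF e⟩
  have hTl : ∀ v : Fin (l + 1), T (line v) = (c : S) := fun v =>
    congrArg Subtype.val (hline v)
  set I : Finset ι := Finset.univ.filter (fun i : ι => line.idxFun i = none) with hI
  set k := I.card with hk
  have hk1 : 1 ≤ k := by
    obtain ⟨i, hi⟩ := line.proper
    refine Finset.card_pos.mpr ⟨i, ?_⟩
    simp [hI, hi]
  -- weight along the line
  have hwt : ∃ c₀ : ℕ, ∀ v : Fin (l + 1), wt (line v) = k * ((v : ℕ) + 1) + c₀ := by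
    refine ⟨∑ i ∈ Finset.univ.filter (fun i : ι => ¬ line.idxFun i = none),
      (((line (0 : Fin (l + 1))) i : ℕ) + 1), ?_⟩
    intro v
    rw [hwtdef]
    simp only
    rw [← Finset.sum_filter_add_sum_filter_not Finset.univ (fun i : ι => line.idxFun i = none)]
    congr 1
    · have : ∀ i ∈ I, ((line v i : ℕ) + 1) = (v : ℕ) + 1 := by
        intro i hi
        have hnone : line.idxFun i = none := by
          simpa [hI] using hi
        rw [line.apply_none v i hnone]
      rw [Finset.sum_congr rfl this, Finset.sum_const, ← hk, smul_eq_mul]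
    · refine Finset.sum_congr rfl fun i hi => ?_
      have hsome : ¬ line.idxFun i = none := by
        simpa [hI] using (Finset.mem_filter.mp hi).2
      obtain ⟨a, ha⟩ := Option.ne_none_iff_exists'.mp hsome
      rw [Combinatorics.Line.coe_apply, Combinatorics.Line.coe_apply, ha]
      rfl
  obtain ⟨c₀, hwt⟩ := hwt
  -- the AP
  refine ⟨(c : S) + (g (line (0 : Fin (l + 1))) + x), itAdd (k - 1) y₀, ?_⟩
  have key : ∀ (e : ℕ) (he : e ≤ l),
      nthAP ((c : S) + (g (line (0 : Fin (l + 1))) + x)) (itAdd (k - 1) y₀) e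
        = (c : S) + (g (line (⟨e, Nat.lt_succ_of_le he⟩ : Fin (l + 1))) + x) := by
    intro e
    induction e with
    | zero =>
      intro h
      rfl
    | succ e ih =>
      intro h
      have he : e ≤ l := Nat.le_of_succ_le h
      rw [nthAP, ih he]
      have hstep : g (line (⟨e + 1, Nat.lt_succ_of_le h⟩ : Fin (l + 1)))
          = g (line (⟨e, Nat.lt_succ_of_le he⟩ : Fin (l + 1))) + itAdd (k - 1) y₀ := by
        rw [hgdef]
        simp only
        rw [hwt, hwt]
        have h1 : (k * (e + 1) + c₀ - 1) + (k - 1) + 1 = k * (e + 1 + 1) + c₀ - 1 := by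
          have h2 : k * (e + 1 + 1) = k * (e + 1) + k := by ring
          have harith : ∀ K kk cc : ℕ, 1 ≤ kk → 1 ≤ K →
              K + cc - 1 + (kk - 1) + 1 = K + kk + cc - 1 := by
            intro K kk cc hkk hK
            omega
          have hK1 : 1 ≤ k * (e + 1) := le_trans hk1 (Nat.le_mul_of_pos_right k (Nat.succ_pos e))
          rw [h2]
          exact harith (k * (e + 1)) k c₀ hk1 hK1
        simp only [Fin.val_mk]
        rw [← h1, itAdd_add]
      rw [hstep]
      rw [add_assoc ((c : S)) (g (line (⟨e, Nat.lt_succ_of_le he⟩ : Fin (l + 1))) + x)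
        (itAdd (k - 1) y₀)]
      congr 1
      rw [add_right_comm]
  intro e he
  rw [key e he]
  have := hTA (line (⟨e, Nat.lt_succ_of_le he⟩ : Fin (l + 1)))
  rwa [hTl] at this

end HJ

section Main

theorem main {S : Type*} [AddCommSemigroup S] (M : Set S) (hM : PiecewiseSyndetic M) (l : ℕ) :
    PiecewiseSyndetic
      {x : APsub S l | ∀ i : Fin (l + 1), (x : Fin (l + 1) → S) i ∈ M} := by
  classical
  obtain ⟨p, L, hL, hpL, hMp⟩ := exists_minLI_of_ps hM
  set P := APsub S l with hP
  let π : Fin (l + 1) → (↥P → S) := fun i x => (x : Fin (l + 1) → S) i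
  have hπadd : ∀ i : Fin (l + 1), ∀ x y : ↥P, π i (x + y) = π i x + π i y := by
    intro i x y
    rfl
  let Φ : Ultrafilter ↥P → (Fin (l + 1) → Ultrafilter S) := fun q i => Ultrafilter.map (π i) q
  have hΦh : ∀ a b : Ultrafilter ↥P, Φ (a + b) = Φ a + Φ b := by
    intro a b
    funext i
    exact map_uadd (π i) (hπadd i) a b
  have hΦc : Continuous Φ := continuous_pi fun i => continuous_umap (π i)
  have hcontW : ∀ r : Fin (l + 1) → Ultrafilter S, Continuous (· + r) := by
    intro r
    exact continuous_pi fun i => (Ultrafilter.continuous_add_left (r i)).comp (continuous_apply i)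
  have hAP : ∀ A : Set S, A ∈ p → ∃ x : ↥P, ∀ i : Fin (l + 1), (x : Fin (l + 1) → S) i ∈ A := by
    intro A hA
    obtain ⟨a, b, hab⟩ := exists_ap_of_ps (ps_of_minLI hL hpL hA) l
    refine ⟨⟨fun i => nthAP a b (i : ℕ), ⟨a, b, rfl, fun i => ?_⟩⟩,
      fun i => hab (i : ℕ) (Nat.lt_succ_iff.mp i.isLt)⟩
    show nthAP a b ((i.succ : Fin (l + 1)) : ℕ) = nthAP a b ((i.castSucc : Fin (l + 1)) : ℕ) + b
    rw [Fin.val_succ, Fin.coe_castSucc]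
    rfl
  set 𝒜 : Set (Set ↥P) := {X | ∃ A : Fin (l + 1) → Set S, (∀ i, A i ∈ p) ∧
      X = {x : ↥P | ∀ i, (x : Fin (l + 1) → S) i ∈ A i}} with h𝒜
  have hFIP : ∀ Tf : Finset (Set ↥P), (↑Tf : Set (Set ↥P)) ⊆ 𝒜 →
      (⋂₀ (↑Tf : Set (Set ↥P))).Nonempty := by
    intro Tf hTf
    set φA : Set ↥P → (Fin (l + 1) → Set S) := fun X =>
      if h : X ∈ 𝒜 then h.choose else fun _ => univ with hφA
    have hφ1 : ∀ X ∈ Tf, (∀ i, φA X i ∈ p) ∧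
        X = {x : ↥P | ∀ i, (x : Fin (l + 1) → S) i ∈ φA X i} := by
      intro X hX
      have hmem : X ∈ 𝒜 := hTf hX
      simp only [hφA, dif_pos hmem]
      exact hmem.choose_spec
    have hAip : (⋂ i : Fin (l + 1), ⋂ X ∈ Tf, φA X i) ∈ p := by
      rw [← Ultrafilter.mem_coe]
      refine Filter.iInter_mem.mpr fun i => ?_
      exact (Filter.biInter_finset_mem Tf).mpr fun X hX => (hφ1 X hX).1 i
    obtain ⟨x, hx⟩ := hAP _ hAip
    refine ⟨x, fun X hX => ?_⟩
    rw [(hφ1 X hX).2]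
    intro i
    exact mem_iInter₂.mp (mem_iInter.mp (hx i) i) X hX
  obtain ⟨q₀, hq₀⟩ := Ultrafilter.exists_ultrafilter_of_finite_inter_nonempty 𝒜 hFIP
  have hΦq₀ : Φ q₀ = fun _ => p := by
    funext i
    have hle : (Ultrafilter.map (π i) q₀ : Filter S) ≤ (p : Filter S) := by
      rw [Filter.le_def]
      intro A hA
      rw [Ultrafilter.mem_coe, Ultrafilter.mem_map]
      have hX : {x : ↥P | ∀ j, (x : Fin (l + 1) → S) j ∈
          (fun j => if j = i then A else univ) j} ∈ 𝒜 := by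
        refine ⟨fun j => if j = i then A else univ, fun j => ?_, rfl⟩
        show (if j = i then A else univ) ∈ p
        by_cases hj : j = i
        · rw [if_pos hj]; exact hA
        · rw [if_neg hj]; exact univ_mem
      refine mem_of_superset (hq₀ hX) ?_
      intro x hx
      have h2 : (x : Fin (l + 1) → S) i ∈ (if i = i then A else univ) := hx i
      rw [if_pos rfl] at h2
      exact h2
    exact Ultrafilter.coe_le_coe.mp hle
  have hLW := minLI_pi (I := Fin (l + 1)) (Ultrafilter.continuous_add_left) hL
  have hpLW : (fun _ : Fin (l + 1) => p) ∈ {w : Fin (l + 1) → Ultrafilter S | ∀ i, w i ∈ L} :=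
    fun i => hpL
  have hrange : (fun _ : Fin (l + 1) => p) ∈ Set.range Φ := ⟨q₀, hΦq₀⟩
  have hrc : IsClosed (Set.range Φ) := (isCompact_range hΦc).isClosed
  have hrs : ∀ x ∈ Set.range Φ, ∀ y ∈ Set.range Φ, x + y ∈ Set.range Φ := by
    rintro _ ⟨a, rfl⟩ _ ⟨b, rfl⟩
    exact ⟨a + b, hΦh a b⟩
  obtain ⟨LV, hLV, hpLV⟩ := mem_minLI_of_mem hcontW hrc hrs hLW hrange hpLW
  obtain ⟨q, LP, hLP, hqLP, hΦq⟩ := exists_minLI_preimage hcontW hΦc hΦh hLV hpLV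
  have hTq : {x : ↥P | ∀ i : Fin (l + 1), (x : Fin (l + 1) → S) i ∈ M} ∈ q := by
    have hi : ∀ i : Fin (l + 1), π i ⁻¹' M ∈ q := by
      intro i
      have hmap : Ultrafilter.map (π i) q = p := congrFun hΦq i
      have hMm : M ∈ Ultrafilter.map (π i) q := by rw [hmap]; exact hMp
      rwa [Ultrafilter.mem_map] at hMm
    have hInt : (⋂ i : Fin (l + 1), π i ⁻¹' M) ∈ q := by
      rw [← Ultrafilter.mem_coe]
      exact Filter.iInter_mem.mpr fun i => hi i
    refine mem_of_superset hInt ?_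
    intro x hx i
    exact mem_iInter.mp hx i
  exact ps_of_minLI hLP hqLP hTq

end Main

end StmtAux

theorem stmt_11 {S : Type*} [AddCommSemigroup S] [Countable S]
    (hS : ∀ d : ℕ, 0 < d → PiecewiseSyndetic {x : S | ∃ s : S, x = itAdd (d - 1) s})
    (M : Set S) (hM : PiecewiseSyndetic M) (l : ℕ) :
    PiecewiseSyndetic
      {x : APsub S l | ∀ i : Fin (l + 1), (x : Fin (l + 1) → S) i ∈ M} :=
  StmtAux.main M hM l
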